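/- Lagrange interpolation error in terms of the L¹ norm of the derivative. Fix p ≥ 0 and nodes 0 ≤ τ₀ < τ₁ < ⋯ < τ_p ≤ 1. There exists a constant C_p, depending only on p and the nodes, such that for every interval [a,b] with a < b and every (p+1)-times continuously differentiable function w : [a,b] → ℝ^N, the Lagrange interpolant πw of degree p at the points a + τ_k(b−a), k = 0,…,p, satisfies sup_{t∈[a,b]} ‖w(t) − (πw)(t)‖ ≤ C_p (b−a)^p ∫ₐᵇ ‖w^{(p+1)}(s)‖ ds. -/

import Mathlib

open MeasureTheory

/-- The Lagrange nodal basis `{λ_k}` of polynomials of degree `≤ p` on `[0,1]`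
associated with nodes `τ₀ < ⋯ < τ_p`, i.e. `λ_i(τ_j) = δ_{ij}`. -/
noncomputable def lagB (p : ℕ) (τ : Fin (p + 1) → ℝ) (k : Fin (p + 1)) (x : ℝ) : ℝ :=
  ∏ j ∈ Finset.univ.erase k, (x - τ j) / (τ k - τ j)

/-- The degree-`p` Lagrange interpolant of `w` on the interval `[a, b]` at the
nodal points `a + τ_k (b − a)`. -/
noncomputable def interpOn {N : ℕ} (p : ℕ) (τ : Fin (p + 1) → ℝ)
    (w : ℝ → EuclideanSpace ℝ (Fin N)) (a b s : ℝ) : EuclideanSpace ℝ (Fin N) :=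
  ∑ k, lagB p τ k ((s - a) / (b - a)) • w (a + τ k * (b - a))

lemma lagB_continuous (p : ℕ) (τ : Fin (p+1) → ℝ) (k : Fin (p+1)) :
    Continuous (lagB p τ k) := by
  unfold lagB
  exact continuous_finset_prod _ fun j _ => (continuous_id.sub continuous_const).div_const _

lemma lagB_eval_basis (p : ℕ) (τ : Fin (p+1) → ℝ) (k : Fin (p+1)) (u : ℝ) :
    (Lagrange.basis Finset.univ τ k).eval u = lagB p τ k u := by
  unfold lagB Lagrange.basis Lagrange.basisDivisor
  rw [Polynomial.eval_prod]
  exact Finset.prod_congr rfl fun j _ => by simp [div_eq_mul_inv, mul_comm]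

lemma lagB_sum_pow (p : ℕ) (τ : Fin (p+1) → ℝ) (hτ : Function.Injective τ)
    (i : ℕ) (hi : i ≤ p) (u : ℝ) :
    ∑ k, lagB p τ k u * τ k ^ i = u ^ i := by
  have hinj : Set.InjOn τ (Finset.univ : Finset (Fin (p+1))) := fun x _ y _ h => hτ h
  have hdeg : ((Polynomial.X : Polynomial ℝ) ^ i).degree
      < ((Finset.univ : Finset (Fin (p+1))).card : ℕ) := by
    rw [Polynomial.degree_X_pow]
    simp only [Finset.card_univ, Fintype.card_fin]
    exact_mod_cast Nat.lt_succ_of_le hi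
  have h := Lagrange.eq_interpolate hinj hdeg
  have h2 := congrArg (Polynomial.eval u) h
  rw [Lagrange.interpolate_apply, Polynomial.eval_finset_sum] at h2
  simp only [Polynomial.eval_mul, Polynomial.eval_C, Polynomial.eval_pow, Polynomial.eval_X,
    lagB_eval_basis] at h2
  rw [h2]
  exact Finset.sum_congr rfl fun k _ => mul_comm _ _

lemma lagB_interp_poly {E : Type*} [AddCommGroup E] [Module ℝ E]
    (p : ℕ) (τ : Fin (p+1) → ℝ) (hτ : Function.Injective τ)
    (c : ℕ → E) (a b s : ℝ) (hab : b - a ≠ 0) :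
    ∑ k, lagB p τ k ((s-a)/(b-a)) •
        (∑ i ∈ Finset.range (p+1), ((i.factorial : ℝ)⁻¹ * ((a + τ k * (b-a)) - a)^i) • c i)
      = ∑ i ∈ Finset.range (p+1), ((i.factorial : ℝ)⁻¹ * (s-a)^i) • c i := by
  set u := (s-a)/(b-a) with hu
  simp_rw [Finset.smul_sum, smul_smul]
  rw [Finset.sum_comm]
  refine Finset.sum_congr rfl fun i hi => ?_
  rw [← Finset.sum_smul]
  congr 1
  have h1 : ∀ k ∈ (Finset.univ : Finset (Fin (p+1))),
      lagB p τ k u * ((i.factorial : ℝ)⁻¹ * ((a + τ k * (b-a)) - a)^i)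
        = ((i.factorial : ℝ)⁻¹ * (b-a)^i) * (lagB p τ k u * τ k ^ i) := by
    intro k _
    have : (a + τ k * (b-a)) - a = τ k * (b-a) := by ring
    rw [this, mul_pow]; ring
  rw [Finset.sum_congr rfl h1, ← Finset.mul_sum,
    lagB_sum_pow p τ hτ i (Nat.lt_succ_iff.mp (Finset.mem_range.mp hi)) u]
  have : (b-a)^i * u^i = (s-a)^i := by
    rw [← mul_pow, hu, mul_div_cancel₀ _ hab]
  rw [mul_assoc, this]

lemma taylor_rem {E : Type*} [NormedAddCommGroup E] [NormedSpace ℝ E] [CompleteSpace E]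
    (p : ℕ) (a b t : ℝ) (hab : a < b) (ht : t ∈ Set.Icc a b)
    (w : ℝ → E) (hw : ContDiffOn ℝ (p+1 : ℕ) w (Set.Icc a b)) :
    ‖w t - taylorWithinEval w p (Set.Icc a b) a t‖
      ≤ (p.factorial : ℝ)⁻¹ * (b-a)^p
        * ∫ x in a..b, ‖iteratedDerivWithin (p+1) w (Set.Icc a b) x‖ := by
  set D := iteratedDerivWithin (p+1) w (Set.Icc a b) with hD
  have hDc : ContinuousOn D (Set.Icc a b) :=
    hw.continuousOn_iteratedDerivWithin le_rfl (uniqueDiffOn_Icc hab)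
  have hwp : ContDiffOn ℝ p w (Set.Icc a b) := hw.of_le (by exact_mod_cast Nat.le_succ p)
  have hder : DifferentiableOn ℝ (iteratedDerivWithin p w (Set.Icc a b)) (Set.Ioo a b) := by
    have := hw.differentiableOn_iteratedDerivWithin (m := p)
      (by exact_mod_cast Nat.lt_succ_self p) (uniqueDiffOn_Icc hab)
    exact this.mono Set.Ioo_subset_Icc_self
  have hC0 : (0:ℝ) ≤ (p.factorial : ℝ)⁻¹ * (b-a)^p :=
    mul_nonneg (by positivity) (pow_nonneg (by linarith) p)
  have hDcn : ContinuousOn (fun x => ((p.factorial : ℝ)⁻¹ * (b-a)^p) * ‖D x‖) (Set.Icc a b) :=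
    continuousOn_const.mul hDc.norm
  have hint : IntervalIntegrable (fun x => ((p.factorial : ℝ)⁻¹ * (b-a)^p) * ‖D x‖) volume a t := by
    apply ContinuousOn.intervalIntegrable
    rw [Set.uIcc_of_le ht.1]
    exact hDcn.mono (Set.Icc_subset_Icc le_rfl ht.2)
  have key : w t - taylorWithinEval w p (Set.Icc a b) a t
      = ∫ x in a..t, ((p.factorial : ℝ)⁻¹ * (t - x) ^ p) • D x := by
    have hcont : ContinuousOn (fun y => taylorWithinEval w p (Set.Icc a b) y t) (Set.Icc a t) :=
      (continuousOn_taylorWithinEval (uniqueDiffOn_Icc hab) hwp).mono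
        (Set.Icc_subset_Icc le_rfl ht.2)
    have hderiv : ∀ y ∈ Set.Ioo a t, HasDerivAt (fun y => taylorWithinEval w p (Set.Icc a b) y t)
        (((p.factorial : ℝ)⁻¹ * (t - y) ^ p) • D y) y := fun y hy =>
      taylorWithinEval_hasDerivAt_Ioo t hab ⟨hy.1, lt_of_lt_of_le hy.2 ht.2⟩ hwp hder
    have hint2 : IntervalIntegrable (fun x => ((p.factorial : ℝ)⁻¹ * (t - x) ^ p) • D x)
        volume a t := by
      apply ContinuousOn.intervalIntegrable
      rw [Set.uIcc_of_le ht.1]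
      exact ((continuousOn_const.mul ((continuousOn_const.sub continuousOn_id).pow _)).smul
        (hDc.mono (Set.Icc_subset_Icc le_rfl ht.2)))
    have := intervalIntegral.integral_eq_sub_of_hasDeriv_right_of_le ht.1 hcont
      (fun y hy => (hderiv y hy).hasDerivWithinAt) hint2
    rw [this, taylorWithinEval_self]
  rw [key]
  have hbd : ∀ᵐ x ∂volume.restrict (Set.uIoc a t),
      ‖((p.factorial : ℝ)⁻¹ * (t - x) ^ p) • D x‖
        ≤ ((p.factorial : ℝ)⁻¹ * (b-a)^p) * ‖D x‖ := by
    rw [Set.uIoc_of_le ht.1]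
    filter_upwards [ae_restrict_mem measurableSet_Ioc] with x hx
    rw [norm_smul]
    apply mul_le_mul_of_nonneg_right _ (norm_nonneg _)
    rw [Real.norm_eq_abs, abs_mul, abs_pow]
    apply mul_le_mul_of_nonneg_left _ (by positivity : (0:ℝ) ≤ |(p.factorial : ℝ)⁻¹|) |>.trans
    · exact le_of_eq (by rw [abs_of_nonneg (by positivity : (0:ℝ) ≤ (p.factorial : ℝ)⁻¹)])
    · exact pow_le_pow_left₀ (abs_nonneg _)
        (by rw [abs_of_nonneg (by linarith [hx.2] : (0:ℝ) ≤ t - x)]; linarith [hx.1, ht.2]) p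
  calc ‖∫ x in a..t, ((p.factorial : ℝ)⁻¹ * (t - x) ^ p) • D x‖
      ≤ |∫ x in a..t, ((p.factorial : ℝ)⁻¹ * (b-a)^p) * ‖D x‖| :=
        intervalIntegral.norm_integral_le_abs_of_norm_le hbd hint
    _ = ∫ x in a..t, ((p.factorial : ℝ)⁻¹ * (b-a)^p) * ‖D x‖ :=
        abs_of_nonneg (intervalIntegral.integral_nonneg ht.1
          fun x _ => mul_nonneg hC0 (norm_nonneg _))
    _ ≤ ∫ x in a..b, ((p.factorial : ℝ)⁻¹ * (b-a)^p) * ‖D x‖ := by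
        apply intervalIntegral.integral_mono_interval le_rfl ht.1 ht.2
        · exact Filter.Eventually.of_forall fun x => mul_nonneg hC0 (norm_nonneg _)
        · apply ContinuousOn.intervalIntegrable
          rwa [Set.uIcc_of_le hab.le]
    _ = (p.factorial : ℝ)⁻¹ * (b-a)^p * ∫ x in a..b, ‖D x‖ :=
        intervalIntegral.integral_const_mul _ _

/-- **Lagrange interpolation error in terms of the L¹ norm of the derivative.**
There is a constant `C_p`, depending only on `p` and the nodes, such that for every
interval `[a,b]` and every `(p+1)`-times continuously differentiable `w : [a,b] → ℝ^N`,
`sup_{[a,b]} ‖w − πw‖ ≤ C_p (b−a)^p ∫ₐᵇ ‖w^{(p+1)}‖`. -/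
theorem lagrange_interpolation_error (p : ℕ) (τ : Fin (p + 1) → ℝ)
    (hτ : StrictMono τ) (hτ0 : 0 ≤ τ 0) (hτ1 : τ (Fin.last p) ≤ 1) :
    ∃ Cp : ℝ, ∀ (N : ℕ) (a b : ℝ), a < b →
      ∀ w : ℝ → EuclideanSpace ℝ (Fin N), ContDiffOn ℝ (p + 1 : ℕ) w (Set.Icc a b) →
        ∀ s ∈ Set.Icc a b,
          ‖w s - interpOn p τ w a b s‖
            ≤ Cp * (b - a) ^ p
              * ∫ x in a..b, ‖iteratedDerivWithin (p + 1) w (Set.Icc a b) x‖ := by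
  -- the Lebesgue constant
  have hg : Continuous (fun u : ℝ => ∑ k, |lagB p τ k u|) :=
    continuous_finset_sum _ fun k _ => (lagB_continuous p τ k).abs
  obtain ⟨u₀, _, hu₀⟩ := isCompact_Icc.exists_isMaxOn (Set.nonempty_Icc.mpr zero_le_one)
    (hg.continuousOn (s := Set.Icc (0:ℝ) 1))
  set Λ : ℝ := ∑ k, |lagB p τ k u₀| with hΛ
  have hΛ0 : 0 ≤ Λ := Finset.sum_nonneg fun k _ => abs_nonneg _
  refine ⟨(1 + Λ) * (p.factorial : ℝ)⁻¹, fun N a b hab w hw s hs => ?_⟩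
  have hba : (0:ℝ) < b - a := by linarith
  set u := (s - a) / (b - a) with hu
  have hu01 : u ∈ Set.Icc (0:ℝ) 1 := by
    constructor
    · exact div_nonneg (by linarith [hs.1]) hba.le
    · rw [div_le_one hba]; linarith [hs.2]
  -- nodes lie in [a,b]
  have hτk : ∀ k, τ k ∈ Set.Icc (0:ℝ) 1 := fun k =>
    ⟨le_trans hτ0 (hτ.monotone (Fin.zero_le k)), le_trans (hτ.monotone (Fin.le_last k)) hτ1⟩
  have hxk : ∀ k : Fin (p+1), a + τ k * (b - a) ∈ Set.Icc a b := fun k => by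
    constructor
    · nlinarith [(hτk k).1]
    · nlinarith [(hτk k).2]
  set D := iteratedDerivWithin (p+1) w (Set.Icc a b) with hD
  set R : ℝ := (p.factorial : ℝ)⁻¹ * (b-a)^p * ∫ x in a..b, ‖D x‖ with hR
  have hRw : ∀ t ∈ Set.Icc a b, ‖w t - taylorWithinEval w p (Set.Icc a b) a t‖ ≤ R :=
    fun t ht => taylor_rem p a b t hab ht w hw
  have hR0 : 0 ≤ R := le_trans (norm_nonneg _) (hRw a (Set.left_mem_Icc.mpr hab.le))
  -- the interpolant reproduces the Taylor polynomial
  set P : ℝ → EuclideanSpace ℝ (Fin N) := fun t => taylorWithinEval w p (Set.Icc a b) a t with hP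
  have hPx : ∀ t, P t = ∑ i ∈ Finset.range (p+1),
      ((i.factorial : ℝ)⁻¹ * (t - a)^i) • iteratedDerivWithin i w (Set.Icc a b) a := fun t =>
    taylor_within_apply w p (Set.Icc a b) a t
  have hexact : ∑ k, lagB p τ k u • P (a + τ k * (b - a)) = P s := by
    simp_rw [hPx]
    exact lagB_interp_poly p τ hτ.injective _ a b s hba.ne'
  have hsplit : w s - interpOn p τ w a b s
      = (w s - P s) - ∑ k, lagB p τ k u • (w (a + τ k * (b - a)) - P (a + τ k * (b - a))) := by
    rw [interpOn]
    simp_rw [smul_sub, Finset.sum_sub_distrib, hexact]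
    abel
  rw [hsplit]
  have hb1 : ‖∑ k, lagB p τ k u • (w (a + τ k * (b - a)) - P (a + τ k * (b - a)))‖ ≤ Λ * R := by
    calc ‖∑ k, lagB p τ k u • (w (a + τ k * (b - a)) - P (a + τ k * (b - a)))‖
        ≤ ∑ k, ‖lagB p τ k u • (w (a + τ k * (b - a)) - P (a + τ k * (b - a)))‖ :=
          norm_sum_le _ _
      _ ≤ ∑ k, |lagB p τ k u| * R := by
          refine Finset.sum_le_sum fun k _ => ?_
          rw [norm_smul, Real.norm_eq_abs]
          exact mul_le_mul_of_nonneg_left (hRw _ (hxk k)) (abs_nonneg _)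
      _ = (∑ k, |lagB p τ k u|) * R := (Finset.sum_mul _ _ _).symm
      _ ≤ Λ * R := mul_le_mul_of_nonneg_right (hu₀ hu01) hR0
  calc ‖(w s - P s) - ∑ k, lagB p τ k u • (w (a + τ k * (b - a)) - P (a + τ k * (b - a)))‖
      ≤ ‖w s - P s‖ + ‖∑ k, lagB p τ k u • (w (a + τ k * (b - a)) - P (a + τ k * (b - a)))‖ :=
        norm_sub_le _ _
    _ ≤ R + Λ * R := add_le_add (hRw s hs) hb1
    _ = (1 + Λ) * R := by ring
    _ = (1 + Λ) * (p.factorial : ℝ)⁻¹ * (b - a) ^ p * ∫ x in a..b, ‖D x‖ := by rw [hR]; ring
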